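/- Let λ ∈ ℝ, let 0 < β ≤ 1 and h > 0, and let (k_n)_{n≥1} be a non-negative summable sequence with Σ_{n=1}^∞ k_n = κ. Assume λ < −κ. Let (y_n)_{n≥0} be a sequence of non-negative real numbers satisfying, for every n ≥ 1, (1 − βλh) y_n = (1 + (1−β)λh) y_{n−1} + βh Σ_{i=1}^{n−1} k_{n−i} y_i + (1−β)h Σ_{j=1}^{n−2} k_{n−j} y_j. Then lim_{n → ∞} y_n = 0. -/

import Mathlib

/-- Induction lemma for weak A-stability (Lemma 5.1). The sequence `k` represents
`(k_n)_{n ≥ 1}` (the value `k 0` is irrelevant). -/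
theorem stmt_7 (lam : ℝ) (β h : ℝ) (hβ0 : 0 < β) (hβ1 : β ≤ 1) (hh : 0 < h)
    (k : ℕ → ℝ) (κ : ℝ)
    (hknn : ∀ n : ℕ, 1 ≤ n → 0 ≤ k n)
    (hksum : Summable (fun n : ℕ => k (n + 1)))
    (hκ : ∑' n : ℕ, k (n + 1) = κ)
    (hlam : lam < -κ)
    (y : ℕ → ℝ) (hy : ∀ n, 0 ≤ y n)
    (hrec : ∀ n : ℕ, 1 ≤ n →
      (1 - β * lam * h) * y n
        = (1 + (1 - β) * lam * h) * y (n - 1)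
          + β * h * ∑ i ∈ Finset.Icc 1 (n - 1), k (n - i) * y i
          + (1 - β) * h * ∑ j ∈ Finset.Icc 1 (n - 2), k (n - j) * y j) :
    Filter.Tendsto y Filter.atTop (nhds 0) := by
  have hκ0 : 0 ≤ κ := by
    rw [← hκ]; exact tsum_nonneg fun n => hknn (n + 1) (Nat.le_add_left 1 n)
  have hlam0 : lam < 0 := lt_of_lt_of_le hlam (by linarith)
  set a : ℝ := 1 - β * lam * h with ha_def
  set c : ℝ := 1 + (1 - β) * lam * h with hc_def
  set d : ℝ := max (c + h * κ) 0 with hd_def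
  have ha : 0 < a := by
    have : β * lam * h < 0 := by nlinarith [mul_pos hβ0 hh]
    rw [ha_def]; linarith
  have had : 0 < a - d := by
    rcases le_or_gt (c + h * κ) 0 with h1 | h1
    · rw [hd_def, max_eq_right h1]; simpa using ha
    · rw [hd_def, max_eq_left h1.le, ha_def, hc_def]
      nlinarith
  set S : ℕ → ℝ := fun N => ∑ n ∈ Finset.Icc 1 N, y n with hS_def
  have hS0 : ∀ N, 0 ≤ S N := fun N => Finset.sum_nonneg fun n _ => hy n
  have hSmono : ∀ N, S (N - 1) ≤ S N := fun N =>
    Finset.sum_le_sum_of_subset_of_nonneg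
      (Finset.Icc_subset_Icc_right (Nat.sub_le N 1)) (fun n _ _ => hy n)
  have hsum_k_le : ∀ s : Finset ℕ, (∀ n ∈ s, 1 ≤ n) → ∑ n ∈ s, k n ≤ κ := by
    intro s hs
    have h1 : ∑ m ∈ s.image (· - 1), k (m + 1) = ∑ n ∈ s, k (n - 1 + 1) :=
      Finset.sum_image (by
        intro x hx z hz hxz
        have := hs x hx; have := hs z hz; simp only at hxz; omega)
    have h2 : ∑ n ∈ s, k (n - 1 + 1) = ∑ n ∈ s, k n :=
      Finset.sum_congr rfl fun n hn => by have := hs n hn; congr 1; omega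
    rw [← h2, ← h1, ← hκ]
    exact Summable.sum_le_tsum _ (fun m _ => hknn (m + 1) (Nat.le_add_left 1 m)) hksum
  have hconv : ∀ (i : ℕ) (s : Finset ℕ), (∀ n ∈ s, i + 1 ≤ n) →
      ∑ n ∈ s, k (n - i) ≤ κ := by
    intro i s hs
    have h1 : ∑ m ∈ s.image (· - i), k m = ∑ n ∈ s, k (n - i) :=
      Finset.sum_image (by
        intro x hx z hz hxz
        have := hs x hx; have := hs z hz; simp only at hxz; omega)
    rw [← h1]
    apply hsum_k_le
    intro m hm
    simp only [Finset.mem_image] at hm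
    obtain ⟨n, hn, rfl⟩ := hm
    have := hs n hn; omega
  have hIcc : ∀ M : ℕ, Finset.Icc 1 M = (Finset.range M).image (· + 1) := by
    intro M; ext m
    simp only [Finset.mem_Icc, Finset.mem_image, Finset.mem_range]
    constructor
    · rintro ⟨h1, h2⟩; exact ⟨m - 1, by omega, by omega⟩
    · rintro ⟨i, hi, rfl⟩; omega
  have hSr : ∀ M : ℕ, S M = ∑ i ∈ Finset.range M, y (i + 1) := by
    intro M
    rw [hS_def]
    simp only
    rw [hIcc M]
    exact Finset.sum_image (by intro x _ z _ hxz; simp only at hxz; omega)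
  set B : ℝ := |c| * y 0 / (a - d) with hB_def
  have hB0 : 0 ≤ B := div_nonneg (mul_nonneg (abs_nonneg c) (hy 0)) had.le
  have hSB : ∀ N, S N ≤ B := by
    intro N
    rcases Nat.eq_zero_or_pos N with rfl | hN
    · simpa [hS_def] using hB0
    have eA : ∑ n ∈ Finset.Icc 1 N, y (n - 1) = y 0 + S (N - 1) := by
      rw [hIcc N]
      rw [Finset.sum_image (by intro x _ z _ hxz; simp only at hxz; omega)]
      simp only [Nat.add_sub_cancel]
      obtain ⟨M, rfl⟩ : ∃ M, N = M + 1 := ⟨N - 1, by omega⟩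
      rw [Finset.sum_range_succ']
      simp only [Nat.add_sub_cancel, hSr M]
      ring
    have e2 : a * S N = c * (∑ n ∈ Finset.Icc 1 N, y (n - 1))
        + β * h * (∑ n ∈ Finset.Icc 1 N, ∑ i ∈ Finset.Icc 1 (n - 1), k (n - i) * y i)
        + (1 - β) * h * (∑ n ∈ Finset.Icc 1 N, ∑ j ∈ Finset.Icc 1 (n - 2), k (n - j) * y j) := by
      rw [hS_def]
      simp only [Finset.mul_sum, ← Finset.sum_add_distrib]
      refine Finset.sum_congr rfl fun n hn => ?_
      rw [hrec n (Finset.mem_Icc.mp hn).1, Finset.mul_sum, Finset.mul_sum]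
    have hT : ∑ n ∈ Finset.Icc 1 N, ∑ i ∈ Finset.Icc 1 (n - 1), k (n - i) * y i
        ≤ κ * S (N - 1) := by
      rw [Finset.sum_comm' (s' := fun i => Finset.Icc (i + 1) N)
        (t' := Finset.Icc 1 (N - 1))
        (by intro x z; simp only [Finset.mem_Icc]; omega)]
      rw [hS_def]
      simp only [Finset.mul_sum]
      apply Finset.sum_le_sum
      intro i _
      rw [← Finset.sum_mul]
      exact mul_le_mul_of_nonneg_right
        (hconv i _ (fun n hn => (Finset.mem_Icc.mp hn).1)) (hy i)
    have hU : ∑ n ∈ Finset.Icc 1 N, ∑ j ∈ Finset.Icc 1 (n - 2), k (n - j) * y j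
        ≤ κ * S (N - 1) := by
      rw [Finset.sum_comm' (s' := fun j => Finset.Icc (j + 2) N)
        (t' := Finset.Icc 1 (N - 1))
        (by intro x z; simp only [Finset.mem_Icc]; omega)]
      rw [hS_def]
      simp only [Finset.mul_sum]
      apply Finset.sum_le_sum
      intro j _
      rw [← Finset.sum_mul]
      refine mul_le_mul_of_nonneg_right ?_ (hy j)
      exact hconv j _ (fun n hn => by have := (Finset.mem_Icc.mp hn).1; omega)
    have key : a * S N ≤ c * y 0 + (c + h * κ) * S (N - 1) := by
      rw [e2, eA]
      have p1 : β * h * (∑ n ∈ Finset.Icc 1 N, ∑ i ∈ Finset.Icc 1 (n - 1), k (n - i) * y i)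
          ≤ β * h * (κ * S (N - 1)) :=
        mul_le_mul_of_nonneg_left hT (by positivity)
      have p2 : (1 - β) * h * (∑ n ∈ Finset.Icc 1 N, ∑ j ∈ Finset.Icc 1 (n - 2), k (n - j) * y j)
          ≤ (1 - β) * h * (κ * S (N - 1)) :=
        mul_le_mul_of_nonneg_left hU (by nlinarith)
      nlinarith [p1, p2]
    have h1 : c * y 0 ≤ |c| * y 0 := mul_le_mul_of_nonneg_right (le_abs_self c) (hy 0)
    have h2 : (c + h * κ) * S (N - 1) ≤ d * S N := by
      rcases le_or_gt (c + h * κ) 0 with hcz | hcz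
      · calc (c + h * κ) * S (N - 1) ≤ 0 := mul_nonpos_of_nonpos_of_nonneg hcz (hS0 _)
          _ ≤ d * S N := mul_nonneg (le_max_right _ _) (hS0 _)
      · rw [hd_def, max_eq_left hcz.le]
        exact mul_le_mul_of_nonneg_left (hSmono N) hcz.le
    rw [hB_def, le_div_iff₀ had]
    nlinarith [key, h1, h2]
  have hbound : ∀ n : ℕ, ∑ i ∈ Finset.range n, y i ≤ y 0 + B := by
    intro n
    rcases Nat.eq_zero_or_pos n with rfl | hn
    · simp only [Finset.range_zero, Finset.sum_empty]
      linarith [hy 0, hB0]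
    obtain ⟨M, rfl⟩ : ∃ M, n = M + 1 := ⟨n - 1, by omega⟩
    rw [Finset.sum_range_succ', ← hSr M]
    have := hSB M
    linarith
  have hsumy : Summable y := summable_of_sum_range_le hy hbound
  exact hsumy.tendsto_atTop_zero
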